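/- For a third order tensor A ∈ ℝ^{d1×d2×d3} and the contracted biquadratic tensor T^{(3)}, the nuclear norm satisfies ‖A‖_*² ≥ ‖T^{(3)}‖_*. -/
import Mathlib


noncomputable section

/-- Contraction of `A` with itself on the third index. -/
def T3 {d1 d2 d3 : ℕ} (A : Fin d1 → Fin d2 → Fin d3 → ℝ) :
    Fin d1 → Fin d2 → Fin d1 → Fin d2 → ℝ :=
  fun i j p q => ∑ k, A i j k * A p q k

/-- Nuclear norm of a third order tensor. -/
noncomputable def nuc3 {d1 d2 d3 : ℕ} (A : Fin d1 → Fin d2 → Fin d3 → ℝ) : ℝ :=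
  sInf { s : ℝ | ∃ r : ℕ, ∃ lam : Fin r → ℝ, ∃ u : Fin r → Fin d1 → ℝ,
    ∃ v : Fin r → Fin d2 → ℝ, ∃ w : Fin r → Fin d3 → ℝ,
    (∀ m, ∑ i, u m i ^ 2 = 1) ∧ (∀ m, ∑ j, v m j ^ 2 = 1) ∧ (∀ m, ∑ k, w m k ^ 2 = 1) ∧
    (∀ i j k, A i j k = ∑ m, lam m * u m i * v m j * w m k) ∧
    s = ∑ m, |lam m| }

/-- Nuclear norm of a fourth order tensor of size `d1 × d2 × d1 × d2`. -/
noncomputable def nuc4 {d1 d2 : ℕ} (T : Fin d1 → Fin d2 → Fin d1 → Fin d2 → ℝ) : ℝ :=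
  sInf { s : ℝ | ∃ r : ℕ, ∃ lam : Fin r → ℝ, ∃ u : Fin r → Fin d1 → ℝ,
    ∃ v : Fin r → Fin d2 → ℝ, ∃ w : Fin r → Fin d1 → ℝ, ∃ t : Fin r → Fin d2 → ℝ,
    (∀ m, ∑ i, u m i ^ 2 = 1) ∧ (∀ m, ∑ j, v m j ^ 2 = 1) ∧
    (∀ m, ∑ i, w m i ^ 2 = 1) ∧ (∀ m, ∑ j, t m j ^ 2 = 1) ∧
    (∀ i j p q, T i j p q = ∑ m, lam m * u m i * v m j * w m p * t m q) ∧
    s = ∑ m, |lam m| }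
section proofaux

/-- Every tensor admits some decomposition, so the `nuc3` set is nonempty. -/
lemma nuc3_set_nonempty {d1 d2 d3 : ℕ} (A : Fin d1 → Fin d2 → Fin d3 → ℝ) :
    { s : ℝ | ∃ r : ℕ, ∃ lam : Fin r → ℝ, ∃ u : Fin r → Fin d1 → ℝ,
      ∃ v : Fin r → Fin d2 → ℝ, ∃ w : Fin r → Fin d3 → ℝ,
      (∀ m, ∑ i, u m i ^ 2 = 1) ∧ (∀ m, ∑ j, v m j ^ 2 = 1) ∧ (∀ m, ∑ k, w m k ^ 2 = 1) ∧
      (∀ i j k, A i j k = ∑ m, lam m * u m i * v m j * w m k) ∧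
      s = ∑ m, |lam m| }.Nonempty := by
  classical
  set r := Fintype.card (Fin d1 × Fin d2 × Fin d3) with hr
  let e : Fin r ≃ (Fin d1 × Fin d2 × Fin d3) := (Fintype.equivFin _).symm
  refine ⟨_, r, fun m => A (e m).1 (e m).2.1 (e m).2.2,
    fun m i => if (e m).1 = i then 1 else 0,
    fun m j => if (e m).2.1 = j then 1 else 0,
    fun m k => if (e m).2.2 = k then 1 else 0, ?_, ?_, ?_, ?_, rfl⟩
  · intro m; simp [ite_pow]
  · intro m; simp [ite_pow]
  · intro m; simp [ite_pow]
  · intro i j k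
    rw [← Equiv.sum_comp e.symm
      (fun m => A (e m).1 (e m).2.1 (e m).2.2 * (if (e m).1 = i then (1:ℝ) else 0) *
        (if (e m).2.1 = j then 1 else 0) * (if (e m).2.2 = k then 1 else 0))]
    simp only [Equiv.apply_symm_apply]
    rw [Fintype.sum_prod_type]
    rw [Fintype.sum_eq_single i]
    · rw [Fintype.sum_prod_type, Fintype.sum_eq_single j]
      · rw [Fintype.sum_eq_single k]
        · simp
        · intro k' hk'; simp [hk']
      · intro j' hj'; simp [hj']
    · intro i' hi'; simp [hi']

end proofaux

theorem stmt11 {d1 d2 d3 : ℕ} (A : Fin d1 → Fin d2 → Fin d3 → ℝ) :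
    nuc3 A ^ 2 ≥ nuc4 (T3 A) := by
  classical
  rw [nuc3, nuc4]
  set S3 := { s : ℝ | ∃ r : ℕ, ∃ lam : Fin r → ℝ, ∃ u : Fin r → Fin d1 → ℝ,
    ∃ v : Fin r → Fin d2 → ℝ, ∃ w : Fin r → Fin d3 → ℝ,
    (∀ m, ∑ i, u m i ^ 2 = 1) ∧ (∀ m, ∑ j, v m j ^ 2 = 1) ∧ (∀ m, ∑ k, w m k ^ 2 = 1) ∧
    (∀ i j k, A i j k = ∑ m, lam m * u m i * v m j * w m k) ∧
    s = ∑ m, |lam m| } with hS3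
  set S4 := { s : ℝ | ∃ r : ℕ, ∃ lam : Fin r → ℝ, ∃ u : Fin r → Fin d1 → ℝ,
    ∃ v : Fin r → Fin d2 → ℝ, ∃ w : Fin r → Fin d1 → ℝ, ∃ t : Fin r → Fin d2 → ℝ,
    (∀ m, ∑ i, u m i ^ 2 = 1) ∧ (∀ m, ∑ j, v m j ^ 2 = 1) ∧
    (∀ m, ∑ i, w m i ^ 2 = 1) ∧ (∀ m, ∑ j, t m j ^ 2 = 1) ∧
    (∀ i j p q, T3 A i j p q = ∑ m, lam m * u m i * v m j * w m p * t m q) ∧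
    s = ∑ m, |lam m| } with hS4
  have hne3 : S3.Nonempty := nuc3_set_nonempty A
  have h3nonneg : ∀ s ∈ S3, (0:ℝ) ≤ s := by
    rintro s ⟨r, lam, u, v, w, _, _, _, _, rfl⟩
    exact Finset.sum_nonneg fun m _ => abs_nonneg _
  have hbdd3 : BddBelow S3 := ⟨0, h3nonneg⟩
  have h0 : 0 ≤ sInf S3 := Real.sInf_nonneg h3nonneg
  -- key: for every s ∈ S3, sInf S4 ≤ s ^ 2
  have key : ∀ s ∈ S3, sInf S4 ≤ s ^ 2 := by
    rintro s ⟨r, lam, u, v, w, hu, hv, hw, hA, rfl⟩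
    set r' := Fintype.card (Fin r × Fin r) with hr'
    let e : Fin r' ≃ (Fin r × Fin r) := (Fintype.equivFin _).symm
    set lam' : Fin r' → ℝ :=
      fun m => lam (e m).1 * lam (e m).2 * ∑ k, w (e m).1 k * w (e m).2 k with hlam'
    have hmem : (∑ m, |lam' m|) ∈ S4 := by
      refine ⟨r', lam', fun m => u (e m).2, fun m => v (e m).2,
        fun m => u (e m).1, fun m => v (e m).1,
        fun m => hu _, fun m => hv _, fun m => hu _, fun m => hv _, ?_, rfl⟩
      intro i j p q
      rw [← Equiv.sum_comp e.symm
        (fun m => lam' m * u (e m).2 i * v (e m).2 j * u (e m).1 p * v (e m).1 q)]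
      simp only [Equiv.apply_symm_apply, hlam']
      rw [Fintype.sum_prod_type]
      show T3 A i j p q = _
      rw [T3]
      simp only [hA i j, hA p q, Finset.sum_mul_sum, Finset.mul_sum, Finset.sum_mul]
      rw [Finset.sum_comm]
      refine Finset.sum_congr rfl fun m _ => ?_
      rw [Finset.sum_comm]
      refine Finset.sum_congr rfl fun n _ => ?_
      refine Finset.sum_congr rfl fun k _ => ?_
      ring
    have hle : (∑ m, |lam' m|) ≤ (∑ m, |lam m|) ^ 2 := by
      have : ∀ m, |lam' m| ≤ |lam (e m).1| * |lam (e m).2| := by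
        intro m
        have hcs : (∑ k, w (e m).1 k * w (e m).2 k) ^ 2 ≤ 1 := by
          have := Finset.sum_mul_sq_le_sq_mul_sq Finset.univ (w (e m).1) (w (e m).2)
          rwa [hw, hw, mul_one] at this
        have habs : |∑ k, w (e m).1 k * w (e m).2 k| ≤ 1 :=
          (sq_le_one_iff_abs_le_one _).1 hcs
        calc |lam' m| = |lam (e m).1| * |lam (e m).2| * |∑ k, w (e m).1 k * w (e m).2 k| := by
              rw [hlam', abs_mul, abs_mul]
          _ ≤ |lam (e m).1| * |lam (e m).2| * 1 := by
              exact mul_le_mul_of_nonneg_left habs (by positivity)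
          _ = |lam (e m).1| * |lam (e m).2| := mul_one _
      calc (∑ m, |lam' m|) ≤ ∑ m, |lam (e m).1| * |lam (e m).2| :=
            Finset.sum_le_sum fun m _ => this m
        _ = ∑ p : Fin r × Fin r, |lam p.1| * |lam p.2| := by
            exact Equiv.sum_comp e (fun p : Fin r × Fin r => |lam p.1| * |lam p.2|)
        _ = (∑ m, |lam m|) ^ 2 := by
            rw [Fintype.sum_prod_type, sq, Finset.sum_mul_sum]
    exact le_trans (csInf_le ⟨0, by
      rintro x ⟨r'', lam'', u'', v'', w'', t'', _, _, _, _, _, rfl⟩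
      exact Finset.sum_nonneg fun m _ => abs_nonneg _⟩ hmem) hle
  by_contra h
  push_neg at h
  have hS4nonneg : 0 ≤ sInf S4 := le_of_lt (lt_of_le_of_lt (by positivity) h)
  have hlt : sInf S3 < Real.sqrt (sInf S4) := (Real.lt_sqrt h0).2 h
  obtain ⟨s, hs, hslt⟩ := (csInf_lt_iff hbdd3 hne3).1 hlt
  have hs0 : 0 ≤ s := h3nonneg s hs
  have : sInf S4 ≤ s ^ 2 := key s hs
  have : sInf S4 < sInf S4 := by
    calc sInf S4 ≤ s ^ 2 := this
      _ < Real.sqrt (sInf S4) ^ 2 := by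
          apply pow_lt_pow_left₀ hslt hs0 (by norm_num)
      _ = sInf S4 := Real.sq_sqrt hS4nonneg
  exact lt_irrefl _ this
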